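/- arXiv:0801.1584 — 5 statements merged into one kernel-verified Lean document; each statement's English description precedes it below -/
import Mathlib

section
/- For n = 1 + 6·(a choose 2) + a·b + c with 1 ≤ a, 0 ≤ b ≤ 5, 0 ≤ c < a, the quantity p₀(n) := 6(a-1) + b + 1 - δ_{0,b+c} (where δ is 1 if b + c = 0 and 0 otherwise) equals ⌈√(12n - 3)⌉ - 3. -/
/-- For `n = 1 + 6·(a choose 2) + a·b + c` with canonical parameters,
`p₀(n) = 6(a-1) + b + 1 - δ_{0,b+c} = ⌈√(12n-3)⌉ - 3`. -/
theorem stmt_1 (n a b c : ℕ) (ha : 1 ≤ a) (hb : b ≤ 5) (hc : c < a)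
    (hn : n = 1 + 6 * Nat.choose a 2 + a * b + c) :
    (6 * ((a : ℤ) - 1) + b + 1 - (if b + c = 0 then 1 else 0)) =
      ⌈Real.sqrt (12 * (n : ℝ) - 3)⌉ - 3 := by
  have h2n : 2 * Nat.choose a 2 = a * (a - 1) := by
    rw [Nat.choose_two_right, Nat.mul_div_cancel' (Nat.even_mul_pred_self a).two_dvd]
  have h2 : 2 * (Nat.choose a 2 : ℝ) = a * (a - 1) := by
    have := congrArg (Nat.cast : ℕ → ℝ) h2n
    push_cast [Nat.cast_sub ha] at this
    linarith
  have ha' : (1:ℝ) ≤ a := by exact_mod_cast ha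
  have hX : 12 * (n : ℝ) - 3 = (6 * a + b - 3)^2 + b * (6 - b) + 12 * c := by
    subst hn
    push_cast
    linear_combination 36 * h2
  have hb' : (b:ℝ) ≤ 5 := by exact_mod_cast hb
  have hb0 : (0:ℝ) ≤ b := Nat.cast_nonneg b
  have hc0 : (0:ℝ) ≤ c := Nat.cast_nonneg c
  have hc' : (c:ℝ) + 1 ≤ a := by exact_mod_cast hc
  by_cases h : b + c = 0
  · have hb0' : b = 0 := by omega
    have hc0' : c = 0 := by omega
    subst hb0' hc0'
    rw [if_pos h]
    have : Real.sqrt (12 * (n : ℝ) - 3) = ((6 * a - 3 : ℤ) : ℝ) := by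
      rw [hX]
      push_cast
      rw [show (6 * (a:ℝ) + 0 - 3)^2 + 0 * (6 - 0) + 12 * 0 = (6*a-3)^2 by ring]
      exact Real.sqrt_sq (by linarith)
    rw [this, Int.ceil_intCast]
    push_cast
    ring
  · rw [if_neg h]
    have hk : ⌈Real.sqrt (12 * (n : ℝ) - 3)⌉ = (6 * a + b - 2 : ℤ) := by
      rw [Int.ceil_eq_iff]
      constructor
      · push_cast
        rw [show ((6:ℝ) * a + b - 2 - 1) = 6*a+b-3 by ring]
        rw [hX]
        apply Real.lt_sqrt (by linarith) |>.mpr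
        have hbc : (0:ℝ) < b * (6 - b) + 12 * c := by
          rcases Nat.eq_zero_or_pos b with hb1 | hb1
          · have : 1 ≤ c := by omega
            have : (1:ℝ) ≤ c := by exact_mod_cast this
            nlinarith
          · have : (1:ℝ) ≤ b := by exact_mod_cast hb1
            nlinarith
        linarith
      · rw [hX]
        push_cast
        rw [show ((6:ℝ) * a + b - 2) = Real.sqrt ((6*a+b-2)^2) by
          rw [Real.sqrt_sq (by linarith)]]
        apply Real.sqrt_le_sqrt
        nlinarith [sq_nonneg ((b:ℝ) - 2)]
    rw [hk]
    ring
end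

section
/- If natural numbers p₁, p₂, p₃, p₄ satisfy n = (p₁ + p₂ - 1)(p₃ + p₄ - 1) - (p₁ choose 2) - (p₄ choose 2), then ⌈√(12n - 3)⌉ - 3 ≤ p₁ + 2p₂ + 2p₃ + p₄ - 6, i.e., 12n - 3 ≤ (p₁ + 2p₂ + 2p₃ + p₄ - 3)². -/
/-- Wegner's lower bound at the arithmetic level: if
`n = (p₁+p₂-1)(p₃+p₄-1) - C(p₁,2) - C(p₄,2)` then
`⌈√(12n-3)⌉ - 3 ≤ p₁+2p₂+2p₃+p₄-6`, i.e. `12n-3 ≤ (p₁+2p₂+2p₃+p₄-3)²`. -/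
theorem stmt_2 (p₁ p₂ p₃ p₄ n : ℤ)
    (h₁ : 1 ≤ p₁) (h₂ : 1 ≤ p₂) (h₃ : 1 ≤ p₃) (h₄ : 1 ≤ p₄)
    (hn : n = (p₁ + p₂ - 1) * (p₃ + p₄ - 1)
        - p₁ * (p₁ - 1) / 2 - p₄ * (p₄ - 1) / 2) :
    ⌈Real.sqrt (12 * (n : ℝ) - 3)⌉ - 3 ≤ p₁ + 2 * p₂ + 2 * p₃ + p₄ - 6 ∧
    12 * n - 3 ≤ (p₁ + 2 * p₂ + 2 * p₃ + p₄ - 3) ^ 2 := by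
  obtain ⟨k₁, hk₁⟩ : Even ((p₁ - 1) * ((p₁ - 1) + 1)) := Int.even_mul_succ_self _
  obtain ⟨k₄, hk₄⟩ : Even ((p₄ - 1) * ((p₄ - 1) + 1)) := Int.even_mul_succ_self _
  have r₁ : (p₁ - 1) * ((p₁ - 1) + 1) = p₁ * (p₁ - 1) := by ring
  have r₄ : (p₄ - 1) * ((p₄ - 1) + 1) = p₄ * (p₄ - 1) := by ring
  have e₁ : p₁ * (p₁ - 1) / 2 = k₁ := by omega
  have e₄ : p₄ * (p₄ - 1) / 2 = k₄ := by omega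
  rw [e₁, e₄] at hn
  have key : 12 * n - 3 ≤ (p₁ + 2 * p₂ + 2 * p₃ + p₄ - 3) ^ 2 := by
    subst hn
    nlinarith [sq_nonneg (p₁ + p₄ - p₂ - p₃), sq_nonneg (p₁ + p₂ - p₃ - p₄),
      sq_nonneg (p₁ - p₄)]
  refine ⟨?_, key⟩
  have hs : (0:ℤ) ≤ p₁ + 2 * p₂ + 2 * p₃ + p₄ - 3 := by omega
  have : Real.sqrt (12 * (n : ℝ) - 3) ≤ (p₁ + 2 * p₂ + 2 * p₃ + p₄ - 3 : ℤ) := by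
    rw [show (12 * (n:ℝ) - 3) = ((12 * n - 3 : ℤ) : ℝ) by push_cast; ring]
    calc Real.sqrt ((12 * n - 3 : ℤ) : ℝ)
        ≤ Real.sqrt (((p₁ + 2 * p₂ + 2 * p₃ + p₄ - 3 : ℤ) : ℝ) ^ 2) :=
          Real.sqrt_le_sqrt (by exact_mod_cast key)
      _ = ((p₁ + 2 * p₂ + 2 * p₃ + p₄ - 3 : ℤ) : ℝ) :=
          Real.sqrt_sq (by exact_mod_cast hs)
  have := Int.ceil_le.2 this
  omega
end

section
/- Suppose b = 2 and 9^ℓ·(3k - 1) = 12(a - c) - 9 for some k, ℓ ≥ 1. Then 4 divides k, and writing k = 4z, we have a - c = 9^ℓ·z - 6·∑_{i=0}^{ℓ-2} 9^i. -/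
/-- Case `b = 2`: from `9^ℓ(3k-1) = 12(a-c) - 9` it follows that `4 ∣ k` and,
writing `k = 4z`, `a - c = 9^ℓ·z - 6·∑_{i=0}^{ℓ-2} 9^i`. -/
theorem stmt_8 (a b c : ℤ) (hb : b = 2) (hac : 0 < a - c) (k ℓ : ℕ)
    (hk : 1 ≤ k) (hℓ : 1 ≤ ℓ)
    (h : (9 : ℤ) ^ ℓ * (3 * k - 1) = 12 * (a - c) - 9) :
    4 ∣ k ∧ ∀ z : ℕ, k = 4 * z →
      a - c = 9 ^ ℓ * z - 6 * ∑ i ∈ Finset.range (ℓ - 1), (9 : ℤ) ^ i := by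
  have h9 : (4 : ℤ) ∣ 9 ^ ℓ - 1 := by
    have h8 := sub_dvd_pow_sub_pow (9 : ℤ) 1 ℓ
    simp only [one_pow] at h8
    exact dvd_trans (by norm_num) h8
  constructor
  · obtain ⟨m, hm⟩ := h9
    have hd : (4 : ℤ) ∣ 3 * (k : ℤ) := by
      refine ⟨3 * (a - c) - 2 - m * (3 * k - 1), ?_⟩
      have h9' : (9 : ℤ) ^ ℓ = 4 * m + 1 := by linarith
      rw [h9'] at h
      linarith
    have : (4 : ℕ) ∣ 3 * k := by exact_mod_cast hd
    omega
  · intro z hz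
    obtain ⟨ℓ', rfl⟩ : ∃ ℓ', ℓ = ℓ' + 1 := ⟨ℓ - 1, by omega⟩
    have hg : (∑ i ∈ Finset.range ℓ', (9 : ℤ) ^ i) * (9 - 1) = 9 ^ ℓ' - 1 :=
      geom_sum_mul 9 ℓ'
    subst hz
    push_cast at h ⊢
    have hpow : (9 : ℤ) ^ (ℓ' + 1) = 9 * 9 ^ ℓ' := by ring
    rw [hpow] at h ⊢
    nlinarith [hg, h]
end

section
/- Let a, b, c be integers with 1 ≤ a, 0 ≤ b ≤ 5, 0 ≤ c < a, not both b = 0 and c = 0. There exist k, ℓ ≥ 1 with 9^ℓ(3k-1) = 12(a-c) + (b-2)² - 9 if and only if either (b = 2 and a - c ≡ -6·∑_{i=0}^{ℓ-2}9^i (mod 9^ℓ) for the ℓ with 9^ℓ(3k-1) = 12(a-c) - 9) or (b = 5 and a - c ≡ 6·9^{ℓ-1} (mod 9^ℓ) for the ℓ with 9^ℓ(3k-1) = 12(a-c)). -/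
lemma aux_cong2 (d : ℤ) (k ℓ : ℕ) (hℓ : 1 ≤ ℓ)
    (h : (9 : ℤ) ^ ℓ * (3 * k - 1) = 12 * d - 9) :
    d ≡ -6 * ∑ i ∈ Finset.range (ℓ - 1), (9 : ℤ) ^ i [ZMOD 9 ^ ℓ] := by
  set S : ℤ := ∑ i ∈ Finset.range (ℓ - 1), (9 : ℤ) ^ i with hSdef
  have hS : S * 8 = 9 ^ (ℓ - 1) - 1 := by
    have := geom_sum_mul (9 : ℤ) (ℓ - 1)
    norm_num at this
    exact this
  have h9 : (9 : ℤ) ^ ℓ = 9 * 9 ^ (ℓ - 1) := by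
    conv_lhs => rw [show ℓ = (ℓ - 1) + 1 by omega]
    ring
  have key3 : 3 * (4 * (d + 6 * S)) = 3 * ((9 : ℤ) ^ ℓ * k) := by
    linear_combination (-1 : ℤ) * h + 9 * hS + (-1 : ℤ) * h9
  have key : 4 * (d + 6 * S) = (9 : ℤ) ^ ℓ * k :=
    mul_left_cancel₀ (by norm_num) key3
  have cop : IsCoprime ((9 : ℤ) ^ ℓ) 4 :=
    (Int.isCoprime_iff_gcd_eq_one.mpr (by norm_num)).pow_left
  have hdvd : (9 : ℤ) ^ ℓ ∣ d + 6 * S :=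
    cop.dvd_of_dvd_mul_left ⟨(k : ℤ), key⟩
  refine Int.modEq_iff_dvd.mpr ?_
  rw [show -6 * S - d = -(d + 6 * S) by ring]
  exact dvd_neg.mpr hdvd

lemma aux_cong5 (d : ℤ) (k ℓ : ℕ) (hℓ : 1 ≤ ℓ)
    (h : (9 : ℤ) ^ ℓ * (3 * k - 1) = 12 * d) :
    d ≡ 6 * 9 ^ (ℓ - 1) [ZMOD 9 ^ ℓ] := by
  have h9 : (9 : ℤ) ^ ℓ = 9 * 9 ^ (ℓ - 1) := by
    conv_lhs => rw [show ℓ = (ℓ - 1) + 1 by omega]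
    ring
  have key3 : 3 * (4 * (d - 6 * 9 ^ (ℓ - 1))) = 3 * ((9 : ℤ) ^ ℓ * ((k : ℤ) - 3)) := by
    linear_combination (-1 : ℤ) * h + 8 * h9
  have key : 4 * (d - 6 * 9 ^ (ℓ - 1)) = (9 : ℤ) ^ ℓ * ((k : ℤ) - 3) :=
    mul_left_cancel₀ (by norm_num) key3
  have cop : IsCoprime ((9 : ℤ) ^ ℓ) 4 :=
    (Int.isCoprime_iff_gcd_eq_one.mpr (by norm_num)).pow_left
  have hdvd : (9 : ℤ) ^ ℓ ∣ d - 6 * 9 ^ (ℓ - 1) :=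
    cop.dvd_of_dvd_mul_left ⟨(k : ℤ) - 3, key⟩
  refine Int.modEq_iff_dvd.mpr ?_
  rw [show 6 * (9 : ℤ) ^ (ℓ - 1) - d = -(d - 6 * 9 ^ (ℓ - 1)) by ring]
  exact dvd_neg.mpr hdvd

/-- Main Proposition: arithmetic characterization of the exceptional numbers. -/
theorem stmt_13 (a b c : ℤ) (ha : 1 ≤ a) (hb0 : 0 ≤ b) (hb5 : b ≤ 5)
    (hc0 : 0 ≤ c) (hca : c < a) (hbc : ¬ (b = 0 ∧ c = 0)) :
    (∃ k ℓ : ℕ, 1 ≤ k ∧ 1 ≤ ℓ ∧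
        (9 : ℤ) ^ ℓ * (3 * k - 1) = 12 * (a - c) + (b - 2) ^ 2 - 9) ↔
    ((b = 2 ∧ ∃ k ℓ : ℕ, 1 ≤ k ∧ 1 ≤ ℓ ∧
        (9 : ℤ) ^ ℓ * (3 * k - 1) = 12 * (a - c) - 9 ∧
        a - c ≡ -6 * ∑ i ∈ Finset.range (ℓ - 1), (9 : ℤ) ^ i [ZMOD 9 ^ ℓ]) ∨
     (b = 5 ∧ ∃ k ℓ : ℕ, 1 ≤ k ∧ 1 ≤ ℓ ∧
        (9 : ℤ) ^ ℓ * (3 * k - 1) = 12 * (a - c) ∧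
        a - c ≡ 6 * 9 ^ (ℓ - 1) [ZMOD 9 ^ ℓ])) := by
  constructor
  · rintro ⟨k, ℓ, hk, hℓ, heq⟩
    have h3 : (3 : ℤ) ∣ 12 * (a - c) + (b - 2) ^ 2 - 9 := by
      rw [← heq]
      exact (dvd_pow (by norm_num) (by omega)).mul_right _
    interval_cases b
    · exfalso; norm_num at h3; omega
    · exfalso; norm_num at h3; omega
    · refine Or.inl ⟨rfl, k, ℓ, hk, hℓ, ?_, ?_⟩
      · linear_combination heq
      · exact aux_cong2 (a - c) k ℓ hℓ (by linear_combination heq)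
    · exfalso; norm_num at h3; omega
    · exfalso; norm_num at h3; omega
    · refine Or.inr ⟨rfl, k, ℓ, hk, hℓ, ?_, ?_⟩
      · linear_combination heq
      · exact aux_cong5 (a - c) k ℓ hℓ (by linear_combination heq)
  · rintro (⟨rfl, k, ℓ, hk, hℓ, heq, -⟩ | ⟨rfl, k, ℓ, hk, hℓ, heq, -⟩) <;>
      exact ⟨k, ℓ, hk, hℓ, by linear_combination heq⟩
end

section
/- For any n ≥ 2 with canonical parameters a, b, c (b, c not both zero), 12n - 3 is not a perfect square, and (6(a-1) + b + 3)² < 12n - 3 ≤ (6(a-1) + b + 4)², hence ⌈√(12n-3)⌉ = 6(a-1) + b + 4. -/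
/-- For `n` with canonical parameters and `(b,c) ≠ (0,0)`, `12n-3` is not a perfect
square, `(6(a-1)+b+3)² < 12n-3 ≤ (6(a-1)+b+4)²`, hence `⌈√(12n-3)⌉ = 6(a-1)+b+4`. -/
theorem stmt_19 (n : ℕ) (hn2 : 2 ≤ n) (a b c : ℤ) (ha : 1 ≤ a) (hb0 : 0 ≤ b)
    (hb5 : b ≤ 5) (hc0 : 0 ≤ c) (hca : c < a) (hbc : ¬ (b = 0 ∧ c = 0))
    (hn : (n : ℤ) = 1 + 6 * (a * (a - 1) / 2) + a * b + c) :
    (¬ ∃ s : ℤ, s ^ 2 = 12 * (n : ℤ) - 3) ∧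
    (6 * (a - 1) + b + 3) ^ 2 < 12 * (n : ℤ) - 3 ∧
    12 * (n : ℤ) - 3 ≤ (6 * (a - 1) + b + 4) ^ 2 ∧
    ⌈Real.sqrt (12 * (n : ℝ) - 3)⌉ = 6 * (a - 1) + b + 4 := by
  have heven : a * (a - 1) / 2 * 2 = a * (a - 1) := by
    apply Int.ediv_mul_cancel
    rcases Int.even_mul_succ_self (a - 1) with ⟨k, hk⟩
    exact ⟨k, by linarith [hk]⟩
  have hD : 12 * (n : ℤ) - 3 = 36 * (a * (a - 1)) + 12 * (a * b) + 12 * c + 9 := by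
    have : (n : ℤ) = 1 + 3 * (a * (a - 1)) + a * b + c := by
      rw [hn]; omega
    rw [this]; ring
  have hbc' : 1 ≤ b ∨ 1 ≤ c := by
    rcases lt_or_ge 0 b with h | h
    · exact Or.inl h
    · have hb : b = 0 := le_antisymm h hb0
      rcases lt_or_ge 0 c with h' | h'
      · exact Or.inr h'
      · exact absurd ⟨hb, le_antisymm h' hc0⟩ hbc
  have hlow : (6 * (a - 1) + b + 3) ^ 2 < 12 * (n : ℤ) - 3 := by
    rcases hbc' with h | h
    · nlinarith [mul_nonneg (by linarith : (0:ℤ) ≤ b - 1) (by linarith : (0:ℤ) ≤ 5 - b)]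
    · nlinarith [mul_nonneg hb0 (by linarith : (0:ℤ) ≤ 6 - b)]
  have hhigh : 12 * (n : ℤ) - 3 < (6 * (a - 1) + b + 4) ^ 2 := by
    nlinarith [sq_nonneg (b - 2)]
  refine ⟨?_, hlow, le_of_lt hhigh, ?_⟩
  · rintro ⟨s, hs⟩
    have h0 : (0:ℤ) ≤ 6 * (a - 1) + b + 3 := by linarith
    have h1 : 6 * (a - 1) + b + 3 < |s| := by
      have : (6 * (a - 1) + b + 3) ^ 2 < |s| ^ 2 := by rw [sq_abs, hs]; exact hlow
      exact lt_of_pow_lt_pow_left₀ 2 (abs_nonneg s) this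
    have h2 : |s| < 6 * (a - 1) + b + 4 := by
      have : |s| ^ 2 < (6 * (a - 1) + b + 4) ^ 2 := by rw [sq_abs, hs]; exact hhigh
      exact lt_of_pow_lt_pow_left₀ 2 (by linarith) this
    omega
  · have hlow' : ((6 * (a - 1) + b + 3 : ℤ) : ℝ) ^ 2 < 12 * (n : ℝ) - 3 := by
      exact_mod_cast hlow
    have hhigh' : 12 * (n : ℝ) - 3 ≤ ((6 * (a - 1) + b + 4 : ℤ) : ℝ) ^ 2 := by
      exact_mod_cast hhigh.le
    have h1 : ((6 * (a - 1) + b + 3 : ℤ) : ℝ) < Real.sqrt (12 * (n : ℝ) - 3) :=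
      Real.lt_sqrt_of_sq_lt hlow'
    have h2 : Real.sqrt (12 * (n : ℝ) - 3) ≤ ((6 * (a - 1) + b + 4 : ℤ) : ℝ) := by
      calc Real.sqrt (12 * (n : ℝ) - 3)
          ≤ Real.sqrt (((6 * (a - 1) + b + 4 : ℤ) : ℝ) ^ 2) := Real.sqrt_le_sqrt hhigh'
        _ = ((6 * (a - 1) + b + 4 : ℤ) : ℝ) := Real.sqrt_sq (by
            have h1 : (1:ℝ) ≤ (a:ℝ) := by exact_mod_cast ha
            have h2 : (0:ℝ) ≤ (b:ℝ) := by exact_mod_cast hb0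
            push_cast; linarith)
    rw [Int.ceil_eq_iff]
    constructor
    · push_cast at h1 ⊢; linarith
    · push_cast at h2 ⊢; linarith
end
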